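/- arXiv:2102.05312 — 3 statements merged into one kernel-verified Lean document; each statement's English description precedes it below -/
import Mathlib

section
/- Let w and u be nonzero vectors in ℝ^d with u a unit vector, and let θ(w,u) = arccos(⟨w,u⟩/(‖w‖‖u‖)) ∈ [0,π] be the angle between them. Then θ(w,u) ≤ π‖w - u‖. -/
open RealInnerProductSpace

theorem stmt4 {d : ℕ} (w u : EuclideanSpace ℝ (Fin d)) (hw : w ≠ 0) (hu : ‖u‖ = 1) :
    Real.arccos (⟪w, u⟫ / (‖w‖ * ‖u‖)) ≤ Real.pi * ‖w - u‖ := by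
  have hwn : (0:ℝ) < ‖w‖ := norm_pos_iff.mpr hw
  set v : EuclideanSpace ℝ (Fin d) := ‖w‖⁻¹ • w with hv
  have hvn : ‖v‖ = 1 := by
    rw [hv, norm_smul, norm_inv, norm_norm, inv_mul_cancel₀ hwn.ne']
  set θ := InnerProductGeometry.angle w u with hθ
  have hθeq : Real.arccos (⟪w, u⟫ / (‖w‖ * ‖u‖)) = θ := rfl
  rw [hθeq]
  have hθv : InnerProductGeometry.angle v u = θ := by
    rw [hv, InnerProductGeometry.angle_smul_left_of_pos _ _ (inv_pos.mpr hwn)]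
  have hθ0 : 0 ≤ θ := InnerProductGeometry.angle_nonneg w u
  have hθπ : θ ≤ Real.pi := InnerProductGeometry.angle_le_pi w u
  -- inner v u = cos θ
  have hinner : ⟪v, u⟫ = Real.cos θ := by
    have := InnerProductGeometry.cos_angle_mul_norm_mul_norm v u
    rw [hθv, hvn, hu] at this
    simpa using this.symm
  -- ‖v - u‖ ^ 2 = 2 - 2 cos θ
  have hnorm2 : ‖v - u‖ ^ 2 = 2 - 2 * Real.cos θ := by
    rw [norm_sub_pow_two_real, hvn, hu, hinner]; ring
  -- θ / π ≤ sin (θ/2)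
  have hsin : θ / Real.pi ≤ Real.sin (θ / 2) := by
    simpa using Real.mul_le_sin (x := θ / 2) (by positivity) (by linarith)
  have hsq : (θ / Real.pi) ^ 2 ≤ (1 - Real.cos θ) / 2 := by
    have h1 := (pow_le_pow_left₀ (by positivity) hsin 2).trans_eq (Real.sin_sq_eq_half_sub _)
    refine h1.trans_eq ?_
    rw [show 2 * (θ / 2) = θ by ring]; ring
  -- θ ≤ (π/2) ‖v - u‖
  have hπ : (0:ℝ) < Real.pi := Real.pi_pos
  have key : θ ≤ Real.pi / 2 * ‖v - u‖ := by
    have h2 : θ ^ 2 ≤ (Real.pi / 2 * ‖v - u‖) ^ 2 := by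
      have : (θ / Real.pi) ^ 2 ≤ ‖v - u‖ ^ 2 / 4 := by rw [hnorm2]; linarith
      have hp2 : (0:ℝ) < Real.pi ^ 2 := by positivity
      rw [div_pow, div_le_div_iff₀ hp2 (by norm_num)] at this
      calc θ ^ 2 = θ ^ 2 * 4 / 4 := by ring
        _ ≤ ‖v - u‖ ^ 2 * Real.pi ^ 2 / 4 := by linarith
        _ = (Real.pi / 2 * ‖v - u‖) ^ 2 := by ring
    exact (pow_le_pow_iff_left₀ hθ0 (by positivity) (by norm_num)).mp h2
  -- ‖v - u‖ ≤ 2 ‖w - u‖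
  have hvw : ‖v - w‖ = |1 - ‖w‖| := by
    have : v - w = (‖w‖⁻¹ - 1) • w := by rw [hv, sub_smul, one_smul]
    rw [this, norm_smul, Real.norm_eq_abs]
    rw [show ‖w‖⁻¹ - 1 = ‖w‖⁻¹ * (1 - ‖w‖) by field_simp]
    rw [abs_mul, abs_of_pos (inv_pos.mpr hwn)]
    field_simp
  have hchord : ‖v - u‖ ≤ 2 * ‖w - u‖ := by
    have h1 : ‖v - u‖ ≤ ‖v - w‖ + ‖w - u‖ := norm_sub_le_norm_sub_add_norm_sub v w u
    have h2 : |1 - ‖w‖| ≤ ‖w - u‖ := by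
      have h3 := abs_norm_sub_norm_le w u
      rw [hu, abs_sub_comm] at h3
      exact h3
    linarith [hvw ▸ h1]
  calc θ ≤ Real.pi / 2 * ‖v - u‖ := key
    _ ≤ Real.pi / 2 * (2 * ‖w - u‖) := by
        apply mul_le_mul_of_nonneg_left hchord (by positivity)
    _ = Real.pi * ‖w - u‖ := by ring
end

section
/- Let ψ : ℝ^d → ℝ be nonnegative with ψ(w) = ψ(-w) for all w, let w* be a unit vector, and define θ̃(w,w*) = min(θ(w,w*), π - θ(w,w*)) where θ is the angle. Let f be nondecreasing with f(r/2) > 0, and suppose ψ(w) ≥ f(θ̃(w,w*)) whenever θ̃(w,w*) ≥ r/2. Let w₁,…,w_T satisfy (1/T)∑ψ(w_t) ≤ (1/32)f(r/2). If τ is uniform on [T] and σ is a uniform random sign, independent of τ, then with probability at least 1/4, the unit vector σ·ŵ_τ satisfies ‖σŵ_τ - w*‖ ≤ r. -/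
open InnerProductGeometry RealInnerProductSpace

-- unit vectors with small angle are close
lemma unit_close {d : ℕ} (u v : EuclideanSpace ℝ (Fin d)) (hu : ‖u‖ = 1) (hv : ‖v‖ = 1) :
    ‖u - v‖ ≤ angle u v := by
  have hcos : Real.cos (angle u v) = (inner ℝ u v : ℝ) := by
    rw [InnerProductGeometry.cos_angle, hu, hv]; simp
  have hsq : ‖u - v‖ ^ 2 = 2 - 2 * (inner ℝ u v : ℝ) := by
    rw [norm_sub_sq_real, hu, hv]; ring
  have hb := Real.one_sub_sq_div_two_le_cos (x := angle u v)
  have h0 : 0 ≤ angle u v := angle_nonneg u v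
  have : ‖u - v‖ ^ 2 ≤ (angle u v) ^ 2 := by
    rw [hsq, ← hcos]; nlinarith
  calc ‖u - v‖ = √(‖u - v‖ ^ 2) := by rw [Real.sqrt_sq (norm_nonneg _)]
    _ ≤ √((angle u v) ^ 2) := Real.sqrt_le_sqrt this
    _ = angle u v := Real.sqrt_sq h0

theorem stmt9 {d T : ℕ} (hT : 0 < T) (r : ℝ) (hr : 0 < r)
    (ψ : EuclideanSpace ℝ (Fin d) → ℝ) (hψ0 : ∀ v, 0 ≤ ψ v) (hψsym : ∀ v, ψ (-v) = ψ v)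
    (wstar : EuclideanSpace ℝ (Fin d)) (hws : ‖wstar‖ = 1)
    (f : ℝ → ℝ) (hf : Monotone f) (hf0 : 0 < f (r / 2))
    (hlb : ∀ v : EuclideanSpace ℝ (Fin d),
      r / 2 ≤ min (angle v wstar) (Real.pi - angle v wstar) →
      f (min (angle v wstar) (Real.pi - angle v wstar)) ≤ ψ v)
    (w : Fin T → EuclideanSpace ℝ (Fin d)) (hw0 : ∀ t, w t ≠ 0)
    (havg : (∑ t, ψ (w t)) / T ≤ f (r / 2) / 32) :
    (1 / 4 : ℝ) * (2 * T) ≤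
      (Nat.card {p : Fin T × Bool //
        ‖(if p.2 then (1 : ℝ) else -1) • (‖w p.1‖⁻¹ • w p.1) - wstar‖ ≤ r} : ℝ) := by
  classical
  set P : Fin T × Bool → Prop :=
    fun p => ‖(if p.2 then (1 : ℝ) else -1) • (‖w p.1‖⁻¹ • w p.1) - wstar‖ ≤ r with hP
  -- good indices
  set G : Finset (Fin T) := Finset.univ.filter (fun t => ψ (w t) < f (r / 2)) with hG
  set B : Finset (Fin T) := Finset.univ.filter (fun t => f (r / 2) ≤ ψ (w t)) with hB
  -- Markov: B.card * f(r/2) ≤ ∑ ψ ≤ T * f(r/2)/32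
  have hsum_le : (∑ t, ψ (w t)) ≤ (T : ℝ) * (f (r / 2) / 32) := by
    have hT' : (0 : ℝ) < T := by exact_mod_cast hT
    rw [div_le_iff₀ hT'] at havg; linarith
  have hBsum : (B.card : ℝ) * f (r / 2) ≤ ∑ t, ψ (w t) := by
    calc (B.card : ℝ) * f (r / 2) = ∑ _t ∈ B, f (r / 2) := by
          rw [Finset.sum_const]; ring
      _ ≤ ∑ t ∈ B, ψ (w t) := by
          refine Finset.sum_le_sum fun t ht => ?_
          exact (Finset.mem_filter.mp ht).2
      _ ≤ ∑ t, ψ (w t) := Finset.sum_le_sum_of_subset_of_nonneg (Finset.subset_univ B)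
          (fun t _ _ => hψ0 _)
  have hBcard : (B.card : ℝ) ≤ (T : ℝ) / 32 := by
    have := hBsum.trans hsum_le
    rw [div_eq_mul_inv]
    nlinarith [hf0]
  have hGB : G = Bᶜ := by
    ext t; simp [hG, hB, not_le]
  have hGcard : (T : ℝ) / 2 ≤ (G.card : ℝ) := by
    have : G.card = T - B.card := by
      rw [hGB, Finset.card_compl, Fintype.card_fin]
    rw [this]
    have hBT : B.card ≤ T := by
      simpa using Finset.card_le_card (Finset.subset_univ B)
    push_cast [Nat.cast_sub hBT]
    linarith
  -- for each good t there is a sign b with P (t, b)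
  have hgood : ∀ t ∈ G, ∃ b : Bool, P (t, b) := by
    intro t ht
    have hψt : ψ (w t) < f (r / 2) := (Finset.mem_filter.mp ht).2
    set v := w t with hv
    set θ := angle v wstar with hθ
    have hmin : min θ (Real.pi - θ) < r / 2 := by
      by_contra h
      push_neg at h
      have h2 : f (r / 2) ≤ f (min θ (Real.pi - θ)) := hf h
      linarith [hlb v h]
    set u : EuclideanSpace ℝ (Fin d) := ‖v‖⁻¹ • v with hu
    have hvn : ‖v‖ ≠ 0 := norm_ne_zero_iff.mpr (hw0 t)
    have hun : ‖u‖ = 1 := by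
      rw [hu, norm_smul, norm_inv, norm_norm, inv_mul_cancel₀ hvn]
    have hau : angle u wstar = θ := by
      rw [hu, hθ]
      exact angle_smul_left_of_pos v wstar (by positivity)
    have hmin0 : 0 ≤ min θ (Real.pi - θ) :=
      le_min (angle_nonneg v wstar) (by linarith [angle_le_pi v wstar])
    rcases le_or_gt θ (Real.pi - θ) with hc | hc
    · refine ⟨true, ?_⟩
      have hlt : angle u wstar < r / 2 := by rw [hau]; simpa [min_eq_left hc] using hmin
      have key : ‖u - wstar‖ ≤ r :=
        (unit_close u wstar hun hws).trans (by linarith)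
      simpa only [hP, if_true, one_smul, hu, hv] using key
    · refine ⟨false, ?_⟩
      have hneg : angle (-u) wstar = Real.pi - θ := by
        rw [angle_neg_left, hau]
      have hlt : angle (-u) wstar < r / 2 := by
        rw [hneg]; simpa [min_eq_right hc.le] using hmin
      have key : ‖-u - wstar‖ ≤ r :=
        (unit_close (-u) wstar (by simpa using hun) hws).trans (by linarith)
      simpa only [hP, Bool.false_eq_true, if_false, neg_one_smul, hu, hv] using key
    -- end hgood
  choose b hb using hgood
  -- injection from G into the filtered set
  have hcard : G.card ≤ (Finset.univ.filter P).card := by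
    apply Finset.card_le_card_of_injOn (fun t => if h : t ∈ G then (t, b t h) else (t, true))
    · intro t ht
      simp only [Finset.mem_coe] at ht
      simp only [dif_pos ht, Finset.mem_coe, Finset.mem_filter, Finset.mem_univ, true_and]
      exact hb t ht
    · intro s hs t ht hst
      simp only [Finset.mem_coe] at hs ht
      have := congrArg Prod.fst hst
      simpa [dif_pos hs, dif_pos ht] using this
  have hNat : (Nat.card {p : Fin T × Bool // P p}) = (Finset.univ.filter P).card := by
    rw [Nat.card_eq_fintype_card, Fintype.card_subtype]
  have : (T : ℝ) / 2 ≤ ((Finset.univ.filter P).card : ℝ) :=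
    hGcard.trans (by exact_mod_cast hcard)
  calc (1 / 4 : ℝ) * (2 * T) = (T : ℝ) / 2 := by ring
    _ ≤ ((Finset.univ.filter P).card : ℝ) := this
    _ = _ := by rw [hNat]
end

section
/- Let u, v be unit vectors in ℝ^d with ‖u - v‖ ≤ ρ, and suppose D_X satisfies: for every unit vector w, P(|⟨w,x⟩| ≥ t) ≤ exp(1 - t/β), and for b ≤ R/2, P(|⟨u,x⟩| ≤ b) ≥ bRL. Let D_{u,b} be D_X conditioned on {|⟨u,x⟩| ≤ b}. Then for any a > 0, P_{x∼D_{u,b}}(|⟨v,x⟩| ≥ a) ≤ exp(1 - a/(b + βρ(1 + ln(1/(RbL))))). -/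
open MeasureTheory RealInnerProductSpace

set_option maxHeartbeats 1000000

theorem stmt16 {d : ℕ} (μ : Measure (EuclideanSpace ℝ (Fin d))) [IsProbabilityMeasure μ]
    (L R β ρ b : ℝ) (hL : 0 < L) (hR : 0 < R) (hβ : 0 < β) (hρ : 0 < ρ)
    (hb0 : 0 < b) (hb : b ≤ R / 2)
    (u v : EuclideanSpace ℝ (Fin d)) (hu : ‖u‖ = 1) (hv : ‖v‖ = 1)
    (huv : ‖u - v‖ ≤ ρ)
    (htail : ∀ w : EuclideanSpace ℝ (Fin d), ‖w‖ = 1 → ∀ t : ℝ, 0 < t →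
      (μ {x | t ≤ |⟪w, x⟫|}).toReal ≤ Real.exp (1 - t / β))
    (hmass : b * R * L ≤ (μ {x | |⟪u, x⟫| ≤ b}).toReal)
    (a : ℝ) (ha : 0 < a) :
    (μ ({x | a ≤ |⟪v, x⟫|} ∩ {x | |⟪u, x⟫| ≤ b})).toReal /
        (μ {x | |⟪u, x⟫| ≤ b}).toReal ≤
      Real.exp (1 - a / (b + β * ρ * (1 + Real.log (1 / (R * b * L))))) := by
  set B := {x : EuclideanSpace ℝ (Fin d) | |⟪u, x⟫| ≤ b} with hBdef
  set m := (μ B).toReal with hmdef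
  have hm1 : m ≤ 1 := by
    rw [hmdef]
    simpa using ENNReal.toReal_mono ENNReal.one_ne_top (prob_le_one (μ := μ) (s := B))
  have hm0 : 0 < m := lt_of_lt_of_le (by positivity) hmass
  have hRbL0 : 0 < R * b * L := by positivity
  have hRbL1 : R * b * L ≤ 1 := by
    calc R * b * L = b * R * L := by ring
    _ ≤ m := hmass
    _ ≤ 1 := hm1
  set s := Real.log (1 / (R * b * L)) with hsdef
  have hs : 0 ≤ s := Real.log_nonneg (by rw [le_div_iff₀ hRbL0]; linarith)
  set c := b + β * ρ * (1 + s) with hcdef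
  have hbc : b < c := by nlinarith [mul_pos hβ hρ]
  have hc : 0 < c := lt_trans hb0 hbc
  have hnum_nonneg : (0:ℝ) ≤ (μ ({x | a ≤ |⟪v, x⟫|} ∩ B)).toReal := ENNReal.toReal_nonneg
  rcases le_or_gt a c with hac | hac
  · -- trivial case: RHS ≥ 1, LHS ≤ 1
    have h1 : (1:ℝ) ≤ Real.exp (1 - a / c) := by
      have h1a : a / c ≤ 1 := (div_le_one hc).mpr hac
      calc (1:ℝ) = Real.exp 0 := Real.exp_zero.symm
      _ ≤ Real.exp (1 - a / c) := Real.exp_le_exp.mpr (by linarith)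
    have h2 : (μ ({x | a ≤ |⟪v, x⟫|} ∩ B)).toReal / m ≤ 1 := by
      rw [div_le_one hm0]
      exact ENNReal.toReal_mono (measure_ne_top μ B) (measure_mono Set.inter_subset_right)
    linarith
  · set w := v - (⟪u, v⟫ : ℝ) • u with hwdef
    have hα : |(⟪u, v⟫ : ℝ)| ≤ 1 := by
      have := abs_real_inner_le_norm u v
      rwa [hu, hv, one_mul] at this
    have hvx : ∀ x : EuclideanSpace ℝ (Fin d), (⟪v, x⟫ : ℝ) = ⟪u, v⟫ * ⟪u, x⟫ + ⟪w, x⟫ := by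
      intro x
      rw [hwdef, inner_sub_left, real_inner_smul_left]
      ring
    by_cases hw0 : w = 0
    · have hempty : ({x | a ≤ |⟪v, x⟫|} ∩ B) = ∅ := by
        rw [Set.eq_empty_iff_forall_notMem]
        rintro x ⟨h1, h2⟩
        have h3 := hvx x
        rw [hw0, inner_zero_left, add_zero] at h3
        have h4 : |(⟪v, x⟫ : ℝ)| ≤ b := by
          rw [h3, abs_mul]
          calc |(⟪u, v⟫ : ℝ)| * |(⟪u, x⟫ : ℝ)| ≤ 1 * b := by
                apply mul_le_mul hα h2 (abs_nonneg _) zero_le_one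
          _ = b := one_mul b
        have h5 : a ≤ b := le_trans h1 h4
        linarith
      rw [hempty, measure_empty]
      simp only [ENNReal.toReal_zero, zero_div]
      exact (Real.exp_pos _).le
    · have hγ : 0 < ‖w‖ := norm_pos_iff.mpr hw0
      set u' := ‖w‖⁻¹ • w with hu'def
      have hu' : ‖u'‖ = 1 := norm_smul_inv_norm hw0
      have hγρ : ‖w‖ ≤ ρ := by
        have h1 : ‖w‖ ^ 2 = 1 - (⟪u, v⟫ : ℝ) ^ 2 := by
          rw [← real_inner_self_eq_norm_sq, hwdef]
          simp only [inner_sub_left, inner_sub_right, real_inner_smul_left,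
            real_inner_smul_right, real_inner_comm v u]
          rw [real_inner_self_eq_norm_sq, real_inner_self_eq_norm_sq, hu, hv]
          ring
        have h2 : ‖u - v‖ ^ 2 = 2 - 2 * (⟪u, v⟫ : ℝ) := by
          rw [← real_inner_self_eq_norm_sq]
          simp only [inner_sub_left, inner_sub_right, real_inner_comm v u]
          rw [real_inner_self_eq_norm_sq, real_inner_self_eq_norm_sq, hu, hv]
          ring
        have h3 : ‖u - v‖ ^ 2 ≤ ρ ^ 2 := by
          nlinarith [norm_nonneg (u - v)]
        nlinarith [sq_nonneg ((⟪u, v⟫ : ℝ) - 1), norm_nonneg w]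
      have hab : b < a := lt_trans hbc hac
      have ht : 0 < (a - b) / ‖w‖ := div_pos (by linarith) hγ
      have hwx : ∀ x : EuclideanSpace ℝ (Fin d), (⟪w, x⟫ : ℝ) = ‖w‖ * ⟪u', x⟫ := by
        intro x
        rw [hu'def, real_inner_smul_left]
        field_simp
      have hsub : ({x | a ≤ |⟪v, x⟫|} ∩ B) ⊆ {x | (a - b) / ‖w‖ ≤ |⟪u', x⟫|} := by
        rintro x ⟨h1, h2⟩
        have h3 : a ≤ b + ‖w‖ * |(⟪u', x⟫ : ℝ)| := by
          calc a ≤ |(⟪v, x⟫ : ℝ)| := h1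
          _ ≤ |(⟪u, v⟫ : ℝ) * ⟪u, x⟫| + |(⟪w, x⟫ : ℝ)| := by
              rw [hvx x]; exact abs_add_le _ _
          _ ≤ b + ‖w‖ * |(⟪u', x⟫ : ℝ)| := by
              rw [abs_mul, hwx x, abs_mul, abs_of_nonneg hγ.le]
              have : |(⟪u, v⟫ : ℝ)| * |(⟪u, x⟫ : ℝ)| ≤ 1 * b :=
                mul_le_mul hα h2 (abs_nonneg _) zero_le_one
              linarith
        show (a - b) / ‖w‖ ≤ |(⟪u', x⟫ : ℝ)|
        rw [div_le_iff₀ hγ]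
        nlinarith
      have hnum : (μ ({x | a ≤ |⟪v, x⟫|} ∩ B)).toReal ≤
          Real.exp (1 - ((a - b) / ‖w‖) / β) := by
        calc (μ ({x | a ≤ |⟪v, x⟫|} ∩ B)).toReal
            ≤ (μ {x | (a - b) / ‖w‖ ≤ |⟪u', x⟫|}).toReal :=
              ENNReal.toReal_mono (measure_ne_top _ _) (measure_mono hsub)
        _ ≤ Real.exp (1 - ((a - b) / ‖w‖) / β) := htail u' hu' _ ht
      -- key inequality: a / c + s ≤ ((a-b)/‖w‖)/β
      have hkey : a / c + s ≤ ((a - b) / ‖w‖) / β := by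
        have hstep1 : a / c + s ≤ (a - b) / (ρ * β) := by
          have hident : (a + s * c) * (ρ * β) ≤ (a - b) * c := by
            nlinarith [mul_nonneg (sub_nonneg.mpr hac.le)
              (add_nonneg hb0.le (mul_nonneg (mul_nonneg hρ.le hβ.le) hs)),
              mul_pos hρ hβ]
          have heq : a / c + s = (a + s * c) / c := by field_simp
          rw [heq, div_le_div_iff₀ hc (mul_pos hρ hβ)]
          nlinarith
        have hstep2 : (a - b) / (ρ * β) ≤ (a - b) / (‖w‖ * β) := by
          apply div_le_div_of_nonneg_left (by linarith) (by positivity)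
          nlinarith
        have heq2 : ((a - b) / ‖w‖) / β = (a - b) / (‖w‖ * β) := div_div _ _ _
        rw [heq2]
        exact le_trans hstep1 hstep2
      have hexp : Real.exp s = 1 / (R * b * L) := Real.exp_log (by positivity)
      calc (μ ({x | a ≤ |⟪v, x⟫|} ∩ B)).toReal / m
          ≤ (μ ({x | a ≤ |⟪v, x⟫|} ∩ B)).toReal / (b * R * L) := by
            apply div_le_div_of_nonneg_left hnum_nonneg (by positivity) hmass
      _ ≤ Real.exp (1 - ((a - b) / ‖w‖) / β) / (b * R * L) := by
            gcongr
      _ = Real.exp (1 - ((a - b) / ‖w‖) / β + s) := by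
            rw [Real.exp_add, hexp]
            rw [div_eq_mul_inv, one_div]
            congr 1
            ring
      _ ≤ Real.exp (1 - a / c) := by
            apply Real.exp_le_exp.mpr
            linarith
end
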